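/- Let A ∈ ℤ^{d×n}, B ∈ ℤ^{m×n} be fixed and let Ā^(N) denote the matrix with first n rows (I_n I_n ⋯ I_n −I_n 0), next m rows (B B ⋯ B 0 I_m-style slack columns), and N diagonal blocks A in the remaining rows (columns grouped as x^1,…,x^N, y, s). Then Ā^(N) is obtained by deleting columns and zero rows from an N-fold matrix built from the fixed blocks (A 0 0) and ((I_n, −I_n, 0); (0, 0, I_n); (B, 0, 0)); consequently the sizes and encoding lengths of the Graver bases of Ā^(N), N = 1, 2, …, grow only polynomially in N. -/

import Mathlib

/-- `z` is a Graver basis element of `D`: a nonzero integer kernel element of `D` that is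
not the sum of two nonzero sign-compatible integer kernel elements. -/
def InGraver {κ ι : Type*} [Fintype κ] [Fintype ι] (D : Matrix κ ι ℤ) (z : ι → ℤ) : Prop :=
  z ≠ 0 ∧ D.mulVec z = 0 ∧
    ¬ ∃ u v : ι → ℤ, u ≠ 0 ∧ v ≠ 0 ∧ D.mulVec u = 0 ∧ D.mulVec v = 0 ∧
      (∀ j, 0 ≤ u j * v j) ∧ z = u + v

/-- A crude binary-free encoding length of an integer vector. -/
def encLen {ι : Type*} [Fintype ι] (z : ι → ℤ) : ℕ := ∑ j, ((z j).natAbs + 1)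

/-- The constraint matrix of the potential-minimization problem: rows
`∑ᵢ xⁱ - y = 0`, `∑ᵢ B xⁱ + s = b⁰`, `A xⁱ = bⁱ`; columns grouped as
`x¹,…,xᴺ` (inl), then `y` (inr inl) and the slacks `s` (inr inr). -/
def AbarN {d n m : ℕ} (A : Matrix (Fin d) (Fin n) ℤ) (B : Matrix (Fin m) (Fin n) ℤ)
    (N : ℕ) :
    Matrix ((Fin n ⊕ Fin m) ⊕ Fin N × Fin d) ((Fin N × Fin n) ⊕ (Fin n ⊕ Fin m)) ℤ :=
  fun r c =>
    match r, c with
    | Sum.inl (Sum.inl j0), Sum.inl (_, j) => if j = j0 then 1 else 0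
    | Sum.inl (Sum.inl j0), Sum.inr (Sum.inl j) => if j = j0 then -1 else 0
    | Sum.inl (Sum.inl _), Sum.inr (Sum.inr _) => 0
    | Sum.inl (Sum.inr r), Sum.inl (_, j) => B r j
    | Sum.inl (Sum.inr _), Sum.inr (Sum.inl _) => 0
    | Sum.inl (Sum.inr r), Sum.inr (Sum.inr r') => if r' = r then 1 else 0
    | Sum.inr (i', r), Sum.inl (i, j) => if i' = i then A r j else 0
    | Sum.inr _, Sum.inr _ => 0

namespace GraverAux

lemma abs_add_of_sign {a b : ℤ} (h : 0 ≤ a * b) : |a + b| = |a| + |b| := by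
  rcases mul_nonneg_iff.mp h with ⟨ha, hb⟩ | ⟨ha, hb⟩
  · rw [abs_of_nonneg ha, abs_of_nonneg hb, abs_of_nonneg (by linarith)]
  · rw [abs_of_nonpos ha, abs_of_nonpos hb, abs_of_nonpos (by linarith)]; ring

lemma conf_split {a c : ℤ} (h1 : 0 ≤ a * c) (h2 : |a| ≤ |c|) : 0 ≤ a * (c - a) := by
  have e3 : a * c = |a| * |c| := by rw [← abs_mul, abs_of_nonneg h1]
  have e4 : |a| * |a| ≤ |a| * |c| := mul_le_mul_of_nonneg_left h2 (abs_nonneg _)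
  have e5 : |a| * |a| = a * a := abs_mul_abs_self _
  nlinarith

/-- greedy selection of a submultiset with prescribed counts -/
lemma select {γ : Type*} [DecidableEq γ] :
    ∀ (M : Multiset γ) (ν : γ → ℕ), (∀ g, ν g ≤ M.count g) →
    ∃ S, S ≤ M ∧ ∀ g, S.count g = ν g := by
  intro M
  induction M using Multiset.induction_on with
  | empty =>
    intro ν h
    exact ⟨0, le_refl _, fun g => by simpa using (Nat.le_zero.mp (by simpa using h g)).symm⟩
  | cons a M ih =>
    intro ν h
    by_cases hpos : 0 < ν a
    · obtain ⟨S', hS'le, hS'c⟩ := ih (Function.update ν a (ν a - 1)) (fun g => by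
        by_cases hg : g = a
        · subst hg
          have := h g
          simp only [Function.update_self]
          rw [Multiset.count_cons_self] at this
          omega
        · have := h g
          rw [Multiset.count_cons_of_ne hg] at this
          simpa [Function.update_of_ne hg] using this)
      refine ⟨a ::ₘ S', Multiset.cons_le_cons a hS'le, fun g => ?_⟩
      by_cases hg : g = a
      · subst hg
        rw [Multiset.count_cons_self, hS'c]
        simp only [Function.update_self]
        omega
      · rw [Multiset.count_cons_of_ne hg, hS'c, Function.update_of_ne hg]
    · obtain ⟨S', hS'le, hS'c⟩ := ih ν (fun g => by
        by_cases hg : g = a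
        · subst hg; omega
        · have := h g
          rwa [Multiset.count_cons_of_ne hg] at this)
      exact ⟨S', le_trans hS'le (Multiset.le_cons_self M a), hS'c⟩

/-- greedy selection across a family -/
lemma family_select {α γ : Type*} [DecidableEq α] [DecidableEq γ] (s : Finset α)
    (T : α → Multiset γ) (ν : γ → ℕ) (h : ∀ g, ν g ≤ ∑ i ∈ s, (T i).count g) :
    ∃ S : α → Multiset γ, (∀ i, S i ≤ T i) ∧ (∀ g, ∑ i ∈ s, (S i).count g = ν g) := by
  induction s using Finset.induction_on generalizing ν with
  | empty =>
    refine ⟨fun _ => 0, fun i => Multiset.zero_le _, fun g => by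
      have := h g; simp at this ⊢; omega⟩
  | insert a s' ha ih =>
    obtain ⟨Sa, hSale, hSac⟩ := select (T a) (fun g => min (ν g) ((T a).count g))
      (fun g => min_le_right _ _)
    obtain ⟨S', hS'le, hS'c⟩ := ih (fun g => ν g - min (ν g) ((T a).count g)) (fun g => by
      have hh := h g
      rw [Finset.sum_insert ha] at hh
      show ν g - min (ν g) ((T a).count g) ≤ _
      have h1 := min_le_left (ν g) ((T a).count g)
      have h2 := min_le_right (ν g) ((T a).count g)
      omega)
    refine ⟨fun i => if i = a then Sa else S' i, fun i => ?_, fun g => ?_⟩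
    · by_cases hi : i = a
      · subst hi; simpa using hSale
      · simpa [hi] using hS'le i
    · rw [Finset.sum_insert ha]
      have e1 : ∑ i ∈ s', ((if i = a then Sa else S' i).count g) = ∑ i ∈ s', (S' i).count g :=
        Finset.sum_congr rfl fun i hi => by
          have : i ≠ a := fun h' => ha (h' ▸ hi)
          simp [this]
      have e2 : (fun i => if i = a then Sa else S' i) a = Sa := by simp
      rw [e1, e2, hSac, hS'c]
      have h1 := min_le_left (ν g) ((T a).count g)
      omega

/-- multiset-map-sum as a count-weighted sum over the whole finite type -/
lemma map_sum_eq_count_sum {γ M : Type*} [DecidableEq γ] [Fintype γ] [AddCommMonoid M]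
    (S : Multiset γ) (v : γ → M) : (S.map v).sum = ∑ g : γ, (S.count g) • v g := by
  rw [Finset.sum_multiset_map_count]
  refine Finset.sum_subset (Finset.subset_univ _) fun g _ hg => ?_
  rw [Multiset.count_eq_zero_of_notMem (by simpa using hg), zero_smul]

lemma card_eq_sum_count {γ : Type*} [DecidableEq γ] [Fintype γ] (S : Multiset γ) :
    Multiset.card S = ∑ g : γ, S.count g := by
  rw [← Multiset.toFinset_sum_count_eq]
  refine Finset.sum_subset (Finset.subset_univ _) fun g _ hg => ?_
  exact Multiset.count_eq_zero_of_notMem (by simpa using hg)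

/-- sums of conformal families: absolute values add up, sign is preserved -/
lemma sum_conf {c : ℤ} : ∀ {T : Multiset ℤ}, (∀ a ∈ T, 0 ≤ a * c ∧ |a| ≤ |c|) →
    |T.sum| = (T.map (fun a => |a|)).sum ∧ 0 ≤ T.sum * c := by
  intro T
  induction T using Multiset.induction_on with
  | empty => simp
  | cons a T ih =>
    intro h
    obtain ⟨ha1, ha2⟩ := h a (Multiset.mem_cons_self a T)
    obtain ⟨ih1, ih2⟩ := ih (fun b hb => h b (Multiset.mem_cons_of_mem hb))
    have hsign : 0 ≤ a * T.sum := by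
      rcases lt_trichotomy c 0 with hc | hc | hc
      · have hc' : 0 < -c := by linarith
        have ha : a ≤ 0 := by nlinarith [mul_pos hc' hc']
        have hs : T.sum ≤ 0 := by nlinarith [mul_pos hc' hc']
        exact mul_nonneg_iff.mpr (Or.inr ⟨ha, hs⟩)
      · have h0 : a = 0 := by
          subst hc
          simpa using le_antisymm (by simpa using ha2) (abs_nonneg a)
        simp [h0]
      · have ha : 0 ≤ a := by nlinarith
        have hs : 0 ≤ T.sum := by nlinarith
        positivity
    constructor
    · rw [Multiset.sum_cons, Multiset.map_cons, Multiset.sum_cons, ← ih1]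
      exact abs_add_of_sign hsign
    · rw [Multiset.sum_cons, add_mul]
      exact add_nonneg ha1 ih2

/-- a nonzero conformal member prevents the sum from vanishing -/
lemma sum_ne_zero_of_mem {c a₀ : ℤ} {T : Multiset ℤ}
    (h : ∀ a ∈ T, 0 ≤ a * c ∧ |a| ≤ |c|) (h0 : a₀ ∈ T) (hne : a₀ ≠ 0) : T.sum ≠ 0 := by
  obtain ⟨h1, -⟩ := sum_conf h
  intro hs
  rw [hs, abs_zero] at h1
  have : |a₀| ∈ T.map (fun a => |a|) := Multiset.mem_map_of_mem _ h0
  have hle : |a₀| ≤ (T.map (fun a => |a|)).sum :=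
    Multiset.single_le_sum (fun x hx => by
      obtain ⟨b, -, rfl⟩ := Multiset.mem_map.mp hx; exact abs_nonneg b) _ this
  have := abs_pos.mpr hne
  omega

/-- nonnegativity of the product of two conformal sums -/
lemma mul_sum_conf_nonneg {c : ℤ} {T₁ T₂ : Multiset ℤ}
    (h1 : ∀ a ∈ T₁, 0 ≤ a * c ∧ |a| ≤ |c|) (h2 : ∀ a ∈ T₂, 0 ≤ a * c ∧ |a| ≤ |c|) :
    0 ≤ T₁.sum * T₂.sum := by
  obtain ⟨-, hs1⟩ := sum_conf h1
  obtain ⟨-, hs2⟩ := sum_conf h2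
  rcases eq_or_ne c 0 with hc | hc
  · subst hc
    have e1 : |T₁.sum| = 0 := by
      obtain ⟨e, -⟩ := sum_conf h1
      rw [e]
      have hz : ∀ x ∈ T₁.map (fun a => |a|), x = 0 := fun x hx => by
        obtain ⟨b, hb, rfl⟩ := Multiset.mem_map.mp hx
        exact le_antisymm (by simpa using (h1 b hb).2) (abs_nonneg b)
      exact Multiset.sum_eq_zero hz
    have : T₁.sum = 0 := abs_eq_zero.mp e1
    simp [this]
  · have hc2 : 0 < c * c := mul_self_pos.mpr hc
    by_contra hneg
    push_neg at hneg
    nlinarith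

lemma sign_of_abs_add {a b : ℤ} (h : |a + b| = |a| + |b|) : 0 ≤ a * b := by
  simp only [Int.abs_eq_natAbs] at h
  have h' : (a + b).natAbs = a.natAbs + b.natAbs := by exact_mod_cast h
  rcases le_or_gt 0 a with ha | ha <;> rcases le_or_gt 0 b with hb | hb
  · positivity
  · have ha0 : a = 0 ∨ b = 0 := by omega
    rcases ha0 with h0 | h0 <;> simp [h0]
  · have ha0 : a = 0 ∨ b = 0 := by omega
    rcases ha0 with h0 | h0 <;> simp [h0]
  · exact mul_nonneg_iff.mpr (Or.inr ⟨ha.le, hb.le⟩)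

variable {κ ι : Type*} [Fintype κ] [Fintype ι] (D : Matrix κ ι ℤ)

/-- Conformal decomposition into Graver elements. -/
lemma exists_decomp : ∀ (M : ℕ) (z : ι → ℤ), (∑ j, (z j).natAbs) = M → D.mulVec z = 0 →
    ∃ T : Multiset (ι → ℤ), (∀ g ∈ T, InGraver D g) ∧ T.sum = z ∧
      ∀ j, (T.map (fun g => |g j|)).sum = |z j| := by
  intro M
  induction M using Nat.strong_induction_on with
  | _ M ih =>
    intro z hM hz
    by_cases h0 : z = 0
    · exact ⟨0, by simp, by simp [h0], by simp [h0]⟩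
    by_cases hg : InGraver D z
    · exact ⟨{z}, by simpa using hg, by simp, by simp⟩
    · have hdec : ∃ u v : ι → ℤ, u ≠ 0 ∧ v ≠ 0 ∧ D.mulVec u = 0 ∧ D.mulVec v = 0 ∧
          (∀ j, 0 ≤ u j * v j) ∧ z = u + v := by
        by_contra hcon
        exact hg ⟨h0, hz, hcon⟩
      obtain ⟨u, v, hu0, hv0, hu, hv, hsgn, huv⟩ := hdec
      have habs : ∀ j, |z j| = |u j| + |v j| := by
        intro j; rw [huv]; exact abs_add_of_sign (hsgn j)
      have hnatabs : ∀ j, (z j).natAbs = (u j).natAbs + (v j).natAbs := by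
        intro j; have := habs j; simp only [Int.abs_eq_natAbs] at this; exact_mod_cast this
      have hMsplit : (∑ j, (u j).natAbs) + (∑ j, (v j).natAbs) = M := by
        rw [← hM, ← Finset.sum_add_distrib]
        exact Finset.sum_congr rfl fun j _ => (hnatabs j).symm
      have hupos : 0 < ∑ j, (u j).natAbs := by
        rcases Function.ne_iff.mp hu0 with ⟨j, hj⟩
        exact Finset.sum_pos' (fun _ _ => Nat.zero_le _)
          ⟨j, Finset.mem_univ j, by simpa [Int.natAbs_pos] using hj⟩
      have hvpos : 0 < ∑ j, (v j).natAbs := by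
        rcases Function.ne_iff.mp hv0 with ⟨j, hj⟩
        exact Finset.sum_pos' (fun _ _ => Nat.zero_le _)
          ⟨j, Finset.mem_univ j, by simpa [Int.natAbs_pos] using hj⟩
      obtain ⟨Tu, hTu, hTusum, hTuabs⟩ := ih _ (by omega) u rfl hu
      obtain ⟨Tv, hTv, hTvsum, hTvabs⟩ := ih _ (by omega) v rfl hv
      refine ⟨Tu + Tv, ?_, ?_, ?_⟩
      · intro g hgm
        rcases Multiset.mem_add.mp hgm with h | h
        exacts [hTu g h, hTv g h]
      · rw [Multiset.sum_add, hTusum, hTvsum, huv]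
      · intro j
        rw [Multiset.map_add, Multiset.sum_add, hTuabs, hTvabs, habs]

variable {κ ι : Type*} [Fintype κ] [Fintype ι]

lemma multiset_sum_apply {ι : Type*} (T : Multiset (ι → ℤ)) (j : ι) :
    T.sum j = (T.map (fun g => g j)).sum := by
  induction T using Multiset.induction_on with
  | empty => simp
  | cons a s ih => simp [ih]

variable {κ ι : Type*} [Fintype κ] [Fintype ι] {D : Matrix κ ι ℤ}

/-- per-piece conformality from an abs-additive decomposition -/
lemma piece_conf {T : Multiset (ι → ℤ)} {z : ι → ℤ} (hsum : T.sum = z)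
    (habs : ∀ j, (T.map (fun g => |g j|)).sum = |z j|) {g : ι → ℤ} (hg : g ∈ T) :
    ∀ j, 0 ≤ g j * z j ∧ |g j| ≤ |z j| := by
  intro j
  have hT : T = g ::ₘ T.erase g := (Multiset.cons_erase hg).symm
  set R := T.erase g with hR
  set a := g j with ha
  set r := (R.map (fun h => h j)).sum with hr
  have hzj : a + r = z j := by
    have := congrFun hsum j
    rw [hT, Multiset.sum_cons] at this
    simpa [multiset_sum_apply] using this
  have habsj : |a| + (R.map (fun h => |h j|)).sum = |z j| := by
    have := habs j
    rw [hT, Multiset.map_cons, Multiset.sum_cons] at this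
    exact this
  have hrle : |r| ≤ (R.map (fun h => |h j|)).sum := by
    have h1 := Multiset.abs_sum_le_sum_abs (s := R.map (fun h => h j))
    rwa [Multiset.map_map] at h1
  have heq : |a + r| = |a| + |r| := by
    have h1 : |a + r| ≤ |a| + |r| := abs_add_le a r
    have h2 : |z j| ≤ |a| + |r| := hzj ▸ h1
    have h3 : |a| + |r| ≤ |z j| := by linarith [habsj, hrle]
    rw [hzj]; linarith
  have hs := sign_of_abs_add heq
  constructor
  · have : a * z j = a * a + a * r := by rw [← hzj]; ring
    nlinarith [sq_nonneg a]
  · have h4 : 0 ≤ |r| := abs_nonneg r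
    linarith [habsj, hrle]

/-- if `u` is conformally dominated by `z`, both Graver-ish, then decomposition -/
lemma graver_antichain {z u : ι → ℤ} (hz : InGraver D z) (hu : u ≠ 0)
    (huk : D.mulVec u = 0) (hconf : ∀ j, 0 ≤ u j * z j ∧ |u j| ≤ |z j|) (hne : u ≠ z) :
    False := by
  obtain ⟨hz0, hzk, hzind⟩ := hz
  refine hzind ⟨u, z - u, hu, sub_ne_zero.mpr (Ne.symm hne), huk, ?_, ?_, by ring⟩
  · rw [Matrix.mulVec_sub, huk, hzk, sub_zero]
  · intro j
    obtain ⟨h1, h2⟩ := hconf j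
    have e3 : u j * z j = |u j| * |z j| := by rw [← abs_mul, abs_of_nonneg h1]
    have e4 : |u j| * |u j| ≤ |u j| * |z j| := mul_le_mul_of_nonneg_left h2 (abs_nonneg _)
    have e5 : |u j| * |u j| = u j * u j := abs_mul_abs_self _
    have : u j * u j ≤ u j * z j := by linarith
    simp only [Pi.sub_apply]
    nlinarith

/-- Dickson: the Graver basis is finite. -/
lemma graver_finite (D : Matrix κ ι ℤ) : {z : ι → ℤ | InGraver D z}.Finite := by
  classical
  have hcover : {z : ι → ℤ | InGraver D z} =
      ⋃ σ : ι → Bool, {z : ι → ℤ | InGraver D z ∧ ∀ j, if σ j then 0 ≤ z j else z j ≤ 0} := by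
    ext z
    simp only [Set.mem_setOf_eq, Set.mem_iUnion]
    constructor
    · intro hz
      refine ⟨fun j => decide (0 ≤ z j), hz, fun j => ?_⟩
      by_cases h : 0 ≤ z j <;> simp [h] <;> omega
    · rintro ⟨σ, hz, -⟩; exact hz
  rw [hcover]
  refine Set.finite_iUnion fun σ => ?_
  set S := {z : ι → ℤ | InGraver D z ∧ ∀ j, if σ j then 0 ≤ z j else z j ≤ 0} with hS
  have hinj : Set.InjOn (fun (z : ι → ℤ) (j : ι) => (z j).natAbs) S := by
    intro z1 h1 z2 h2 heq
    funext j
    have e1 := h1.2 j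
    have e2 := h2.2 j
    have e3 : (z1 j).natAbs = (z2 j).natAbs := congrFun heq j
    by_cases h : σ j <;> simp [h] at e1 e2 <;> omega
  have hanti : IsAntichain (· ≤ ·) ((fun (z : ι → ℤ) (j : ι) => (z j).natAbs) '' S) := by
    rintro y1 ⟨z1, hz1, rfl⟩ y2 ⟨z2, hz2, rfl⟩ hne hle
    have hzne : z1 ≠ z2 := fun h => hne (by rw [h])
    refine graver_antichain (D := D) hz2.1 hz1.1.1 hz1.1.2.1 (fun j => ?_) hzne
    have hlej : (z1 j).natAbs ≤ (z2 j).natAbs := hle j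
    have e1 := hz1.2 j
    have e2 := hz2.2 j
    constructor
    · by_cases h : σ j <;> simp [h] at e1 e2
      · positivity
      · exact mul_nonneg_iff.mpr (Or.inr ⟨e1, e2⟩)
    · simp only [Int.abs_eq_natAbs]; exact_mod_cast hlej
  have hpwo : Set.IsPWO ((fun (z : ι → ℤ) (j : ι) => (z j).natAbs) '' S) :=
    Set.isPWO_of_wellQuasiOrderedLE _
  have hfin : ((fun (z : ι → ℤ) (j : ι) => (z j).natAbs) '' S).Finite :=
    hanti.finite_of_partiallyWellOrderedOn hpwo
  exact Set.Finite.of_finite_image hfin hinj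


lemma abar_kernel_iff (z : ((Fin N × Fin n) ⊕ (Fin n ⊕ Fin m)) → ℤ) :
    (AbarN A B N).mulVec z = 0 ↔
      ((∀ i, A.mulVec (fun j => z (Sum.inl (i, j))) = 0) ∧
       (∀ j0, (∑ i, z (Sum.inl (i, j0))) = z (Sum.inr (Sum.inl j0))) ∧
       (∀ r, (∑ i, B.mulVec (fun j => z (Sum.inl (i, j))) r) + z (Sum.inr (Sum.inr r)) = 0)) := by
  constructor
  · intro h
    refine ⟨fun i => ?_, fun j0 => ?_, fun r => ?_⟩
    · funext r
      have := congrFun h (Sum.inr (i, r))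
      simp only [Matrix.mulVec, dotProduct, AbarN, Fintype.sum_sum_type,
        Fintype.sum_prod_type, Pi.zero_apply] at this
      simpa [Matrix.mulVec, dotProduct, Finset.sum_ite_eq', mul_comm] using this
    · have := congrFun h (Sum.inl (Sum.inl j0))
      simp only [Matrix.mulVec, dotProduct, AbarN, Fintype.sum_sum_type,
        Fintype.sum_prod_type, Pi.zero_apply] at this
      simp only [ite_mul, one_mul, zero_mul, neg_mul, Finset.sum_ite_eq',
        Finset.mem_univ, if_true, Finset.sum_const_zero] at this
      linarith [this]
    · have := congrFun h (Sum.inl (Sum.inr r))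
      simp only [Matrix.mulVec, dotProduct, AbarN, Fintype.sum_sum_type,
        Fintype.sum_prod_type, Pi.zero_apply] at this
      simpa [Matrix.mulVec, dotProduct, Finset.sum_ite_eq'] using this
  · rintro ⟨h1, h2, h3⟩
    funext rr
    rcases rr with (j0 | r) | ⟨i, r⟩
    · have := h2 j0
      simp only [Matrix.mulVec, dotProduct, AbarN, Fintype.sum_sum_type,
        Fintype.sum_prod_type, Pi.zero_apply, ite_mul, one_mul, zero_mul, neg_mul,
        Finset.sum_ite_eq', Finset.mem_univ, if_true, Finset.sum_const_zero]
      linarith [this]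
    · have := h3 r
      simp only [Matrix.mulVec, dotProduct] at this
      simp only [Matrix.mulVec, dotProduct, AbarN, Fintype.sum_sum_type,
        Fintype.sum_prod_type, Pi.zero_apply, ite_mul, one_mul, zero_mul,
        Finset.sum_ite_eq', Finset.mem_univ, if_true, Finset.sum_const_zero]
      linarith [this]
    · have := congrFun (h1 i) r
      simp only [Matrix.mulVec, dotProduct, Pi.zero_apply] at this
      simp only [Matrix.mulVec, dotProduct, AbarN, Fintype.sum_sum_type,
        Fintype.sum_prod_type, Pi.zero_apply, ite_mul, zero_mul,
        Finset.sum_ite_eq', Finset.mem_univ, if_true]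
      simpa using this

variable {d n m : ℕ} (A : Matrix (Fin d) (Fin n) ℤ) (B : Matrix (Fin m) (Fin n) ℤ)

noncomputable def GA : Finset (Fin n → ℤ) := (graver_finite A).toFinset

noncomputable def Ematrix :
    Matrix (Fin n ⊕ Fin m) ({g : Fin n → ℤ // g ∈ GA A} ⊕ (Fin n ⊕ Fin m)) ℤ :=
  fun r c =>
    match c with
    | Sum.inl g => match r with
      | Sum.inl j => g.val j
      | Sum.inr rr => -(B.mulVec g.val rr)
    | Sum.inr r' => if r' = r then -1 else 0

lemma E_kernel_iff (w : ({g : Fin n → ℤ // g ∈ GA A} ⊕ (Fin n ⊕ Fin m)) → ℤ) :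
    (Ematrix A B).mulVec w = 0 ↔
      ((∀ j, (∑ g : {g : Fin n → ℤ // g ∈ GA A}, w (Sum.inl g) * g.val j)
          = w (Sum.inr (Sum.inl j))) ∧
       (∀ rr, (∑ g : {g : Fin n → ℤ // g ∈ GA A}, w (Sum.inl g) * (B.mulVec g.val rr))
          = - w (Sum.inr (Sum.inr rr)))) := by
  constructor
  · intro h
    constructor
    · intro j
      have := congrFun h (Sum.inl j)
      simp only [Matrix.mulVec, dotProduct, Ematrix, Fintype.sum_sum_type,
        Pi.zero_apply, ite_mul, neg_mul, one_mul, zero_mul, Finset.sum_ite_eq',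
        Finset.mem_univ, if_true, Finset.sum_const_zero] at this
      have e : ∀ g : {g : Fin n → ℤ // g ∈ GA A}, g.val j * w (Sum.inl g)
          = w (Sum.inl g) * g.val j := fun g => mul_comm _ _
      rw [Finset.sum_congr rfl (fun g _ => e g)] at this
      linarith [this]
    · intro rr
      have := congrFun h (Sum.inr rr)
      simp only [Matrix.mulVec, dotProduct, Ematrix, Fintype.sum_sum_type,
        Pi.zero_apply, ite_mul, neg_mul, one_mul, zero_mul, Finset.sum_ite_eq',
        Finset.mem_univ, if_true, Finset.sum_const_zero] at this
      have e : ∀ g : {g : Fin n → ℤ // g ∈ GA A},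
          -((∑ x1, B rr x1 * g.val x1) * w (Sum.inl g))
          = -(w (Sum.inl g) * (B.mulVec g.val rr)) := fun g => by
        simp [Matrix.mulVec, dotProduct, mul_comm]
      rw [Finset.sum_congr rfl (fun g _ => e g), Finset.sum_neg_distrib] at this
      linarith [this]
  · rintro ⟨h1, h2⟩
    funext rrr
    rcases rrr with j | rr
    · have := h1 j
      simp only [Matrix.mulVec, dotProduct, Ematrix, Fintype.sum_sum_type,
        Pi.zero_apply, ite_mul, neg_mul, one_mul, zero_mul, Finset.sum_ite_eq',
        Finset.mem_univ, if_true, Finset.sum_const_zero]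
      have e : ∀ g : {g : Fin n → ℤ // g ∈ GA A}, g.val j * w (Sum.inl g)
          = w (Sum.inl g) * g.val j := fun g => mul_comm _ _
      rw [Finset.sum_congr rfl (fun g _ => e g)]
      linarith [this]
    · have := h2 rr
      simp only [Matrix.mulVec, dotProduct, Ematrix, Fintype.sum_sum_type,
        Pi.zero_apply, ite_mul, neg_mul, one_mul, zero_mul, Finset.sum_ite_eq',
        Finset.mem_univ, if_true, Finset.sum_const_zero]
      have e : ∀ g : {g : Fin n → ℤ // g ∈ GA A},
          -((∑ x1, B rr x1 * g.val x1) * w (Sum.inl g))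
          = -(w (Sum.inl g) * (B.mulVec g.val rr)) := fun g => by
        simp [Matrix.mulVec, dotProduct, mul_comm]
      rw [Finset.sum_congr rfl (fun g _ => e g), Finset.sum_neg_distrib]
      linarith [this]


noncomputable def GE := (graver_finite (Ematrix A B)).toFinset

noncomputable def g0 : ℕ :=
  (GE A B).sup (fun w => ∑ g : {g : Fin n → ℤ // g ∈ GA A}, (w (Sum.inl g)).natAbs)

noncomputable def CE : ℕ :=
  (GE A B).sup (fun w => Finset.univ.sup fun r : Fin n ⊕ Fin m => (w (Sum.inr r)).natAbs)

noncomputable def MA : ℕ := (GA A).sup (fun g => Finset.univ.sup fun j => (g j).natAbs)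

noncomputable def CC : ℕ := max (g0 A B * MA A) (CE A B)

section Main

variable {d n m : ℕ} (A : Matrix (Fin d) (Fin n) ℤ) (B : Matrix (Fin m) (Fin n) ℤ)

lemma graver_abar_bounds {N : ℕ} {z : ((Fin N × Fin n) ⊕ (Fin n ⊕ Fin m)) → ℤ}
    (hz : InGraver (AbarN A B N) z) :
    ((Finset.univ.filter (fun i : Fin N => ∃ j, z (Sum.inl (i, j)) ≠ 0)).card ≤ g0 A B) ∧
    (∀ c, (z c).natAbs ≤ CC A B) := by
  classical
  obtain ⟨hz0, hzk, hzind⟩ := hz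
  have hzk0 := hzk
  rw [abar_kernel_iff] at hzk
  obtain ⟨hA, hy, hs⟩ := hzk
  set x : Fin N → Fin n → ℤ := fun i j => z (Sum.inl (i, j)) with hxdef
  choose T hT1 hT2 hT3 using fun i => exists_decomp A _ (x i) rfl (hA i)
  set T' : Fin N → Multiset {g : Fin n → ℤ // g ∈ GA A} := fun i =>
    (T i).attach.map (fun p => ⟨p.val, (Set.Finite.mem_toFinset _).mpr (hT1 i p.val p.prop)⟩)
    with hT'def
  have hT'map : ∀ i, (T' i).map Subtype.val = T i := by
    intro i
    rw [hT'def]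
    rw [Multiset.map_map]
    exact Multiset.attach_map_val (T i)
  set lam : {g : Fin n → ℤ // g ∈ GA A} → ℕ := fun g => ∑ i, (T' i).count g with hlamdef
  -- block sums written through T'
  have hxT' : ∀ i j, x i j = ((T' i).map (fun g => g.val j)).sum := by
    intro i j
    have h1 : x i j = ((T i).map (fun h => h j)).sum := by
      rw [← hT2 i, multiset_sum_apply]
    rw [h1, ← hT'map i, Multiset.map_map]
    rfl
  have hxabs : ∀ i j, |x i j| = ((T' i).map (fun g => |g.val j|)).sum := by
    intro i j
    rw [← hT3 i j, ← hT'map i, Multiset.map_map]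
    rfl
  -- conformality of pieces within blocks
  have hpiece : ∀ i, ∀ g ∈ T' i, ∀ j, 0 ≤ g.val j * x i j ∧ |g.val j| ≤ |x i j| := by
    intro i g hgm j
    have hmem : g.val ∈ T i := by
      rw [← hT'map i]; exact Multiset.mem_map_of_mem _ hgm
    exact piece_conf (hT2 i) (hT3 i) hmem j
  -- the count identity
  have hyid : ∀ j, (∑ g : {g : Fin n → ℤ // g ∈ GA A}, (lam g : ℤ) * g.val j) = ∑ i, x i j := by
    intro j
    have h1 : ∀ i, x i j = ∑ g : {g : Fin n → ℤ // g ∈ GA A},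
        ((T' i).count g) • g.val j := by
      intro i; rw [hxT' i j, map_sum_eq_count_sum]
    rw [Finset.sum_congr rfl fun i _ => h1 i, Finset.sum_comm]
    refine Finset.sum_congr rfl fun g _ => ?_
    rw [hlamdef]
    simp only [nsmul_eq_mul]
    push_cast
    rw [Finset.sum_mul]
  set w : ({g : Fin n → ℤ // g ∈ GA A} ⊕ (Fin n ⊕ Fin m)) → ℤ :=
    Sum.elim (fun g => (lam g : ℤ)) (fun r => z (Sum.inr r)) with hwdef
  have hwk : (Ematrix A B).mulVec w = 0 := by
    rw [E_kernel_iff]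
    constructor
    · intro j
      show (∑ g, (lam g : ℤ) * g.val j) = z (Sum.inr (Sum.inl j))
      rw [hyid j]
      exact hy j
    · intro rr
      show (∑ g, (lam g : ℤ) * (B.mulVec g.val rr)) = - z (Sum.inr (Sum.inr rr))
      have h1 : ∀ g : {g : Fin n → ℤ // g ∈ GA A}, (lam g : ℤ) * (B.mulVec g.val rr)
          = ∑ j, B rr j * ((lam g : ℤ) * g.val j) := by
        intro g
        simp only [Matrix.mulVec, dotProduct, Finset.mul_sum]
        exact Finset.sum_congr rfl fun j _ => by ring
      rw [Finset.sum_congr rfl fun g _ => h1 g, Finset.sum_comm]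
      have h2 : ∀ j, (∑ g : {g : Fin n → ℤ // g ∈ GA A}, B rr j * ((lam g : ℤ) * g.val j))
          = B rr j * (∑ i, x i j) := by
        intro j
        rw [← Finset.mul_sum, hyid j]
      rw [Finset.sum_congr rfl fun j _ => h2 j]
      have h3 := hs rr
      have h4 : (∑ j, B rr j * ∑ i, x i j) = ∑ i, B.mulVec (x i) rr := by
        simp only [Matrix.mulVec, dotProduct, Finset.mul_sum]
        rw [Finset.sum_comm]
      rw [h4]
      linarith
  obtain ⟨W, hW1, hW2, hW3⟩ := exists_decomp (Ematrix A B) _ w rfl hwk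
  -- case analysis on the number of pieces of w
  obtain h0 | h1 | h2 : Multiset.card W = 0 ∨ Multiset.card W = 1 ∨ 2 ≤ Multiset.card W := by
    omega
  · -- W empty : z = 0, contradiction
    exfalso
    rw [Multiset.card_eq_zero] at h0
    rw [h0, Multiset.sum_zero] at hW2
    have hlam0 : ∀ g, lam g = 0 := by
      intro g
      have h := congrFun hW2 (Sum.inl g)
      simp only [hwdef, Sum.elim_inl, Pi.zero_apply] at h
      exact_mod_cast h.symm
    have hT'0 : ∀ i, T' i = 0 := by
      intro i
      by_contra hne
      obtain ⟨g, hg⟩ := Multiset.exists_mem_of_ne_zero hne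
      have h1 : 0 < (T' i).count g := Multiset.count_pos.mpr hg
      have h2 : (T' i).count g ≤ lam g :=
        Finset.single_le_sum (f := fun i => (T' i).count g)
          (fun _ _ => Nat.zero_le _) (Finset.mem_univ i)
      rw [hlam0 g] at h2
      omega
    apply hz0
    funext c
    rcases c with ⟨i, j⟩ | r
    · show x i j = 0
      rw [hxT' i j, hT'0 i]
      simp
    · have := congrFun hW2 (Sum.inr r)
      simpa [hwdef] using this.symm
  · -- W a singleton : w is a Graver element of E, extract the bounds
    obtain ⟨a, ha⟩ := Multiset.card_eq_one.mp h1
    rw [ha, Multiset.sum_singleton] at hW2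
    have hwGE : w ∈ GE A B := by
      rw [GE, Set.Finite.mem_toFinset]
      exact hW2 ▸ hW1 a (ha ▸ Multiset.mem_singleton_self a)
    -- total number of pieces
    have hsumlam : (∑ g : {g : Fin n → ℤ // g ∈ GA A}, lam g) ≤ g0 A B := by
      have h1' : (∑ g : {g : Fin n → ℤ // g ∈ GA A}, lam g)
          = ∑ g : {g : Fin n → ℤ // g ∈ GA A}, (w (Sum.inl g)).natAbs := by
        refine Finset.sum_congr rfl fun g _ => ?_
        have e : w (Sum.inl g) = (lam g : ℤ) := rfl
        rw [e, Int.natAbs_natCast]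
      rw [h1']
      exact Finset.le_sup (f := fun w => ∑ g : {g : Fin n → ℤ // g ∈ GA A},
        (w (Sum.inl g)).natAbs) hwGE
    constructor
    · -- few nonzero blocks
      have hcard : ∀ i, (∃ j, z (Sum.inl (i, j)) ≠ 0) → 1 ≤ Multiset.card (T' i) := by
        intro i hij
        obtain ⟨j, hj⟩ := hij
        rcases Multiset.empty_or_exists_mem (T' i) with he | ⟨g, hg⟩
        · exfalso
          apply hj
          show x i j = 0
          rw [hxT' i j, he]
          simp
        · have := Multiset.card_pos.mpr
            (fun h => Multiset.notMem_zero g (h ▸ hg))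
          omega
      calc (Finset.univ.filter (fun i : Fin N => ∃ j, z (Sum.inl (i, j)) ≠ 0)).card
          = ∑ i ∈ Finset.univ.filter (fun i : Fin N => ∃ j, z (Sum.inl (i, j)) ≠ 0), 1 := by
            simp
        _ ≤ ∑ i ∈ Finset.univ.filter (fun i : Fin N => ∃ j, z (Sum.inl (i, j)) ≠ 0),
              Multiset.card (T' i) := by
            refine Finset.sum_le_sum fun i hi => ?_
            exact hcard i (by simpa using hi)
        _ ≤ ∑ i, Multiset.card (T' i) := by
            refine Finset.sum_le_sum_of_subset_of_nonneg (Finset.filter_subset _ _)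
              fun _ _ _ => Nat.zero_le _
        _ = ∑ g : {g : Fin n → ℤ // g ∈ GA A}, lam g := by
            rw [Finset.sum_congr rfl fun i (_ : i ∈ Finset.univ) => card_eq_sum_count (T' i)]
            rw [Finset.sum_comm]
        _ ≤ g0 A B := hsumlam
    · -- all entries bounded
      intro c
      rcases c with ⟨i, j⟩ | r
      · -- block entries
        have hxb : |x i j| ≤ ((g0 A B) * (MA A) : ℕ) := by
          rw [hxabs i j]
          have hcard : Multiset.card ((T' i).map (fun g => |g.val j|))
              ≤ g0 A B := by
            rw [Multiset.card_map]
            calc Multiset.card (T' i) ≤ ∑ i', Multiset.card (T' i') :=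
                  Finset.single_le_sum (f := fun i' => Multiset.card (T' i'))
                    (fun _ _ => Nat.zero_le _) (Finset.mem_univ i)
              _ = ∑ g : {g : Fin n → ℤ // g ∈ GA A}, lam g := by
                  rw [Finset.sum_congr rfl fun i' (_ : i' ∈ Finset.univ) =>
                    card_eq_sum_count (T' i')]
                  rw [Finset.sum_comm]
              _ ≤ g0 A B := hsumlam
          have hbd : ∀ t ∈ (T' i).map (fun g => |g.val j|), t ≤ ((MA A : ℕ) : ℤ) := by
            intro t ht
            obtain ⟨g, hg, rfl⟩ := Multiset.mem_map.mp ht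
            have h1' : (g.val j).natAbs ≤ Finset.univ.sup (fun j' => (g.val j').natAbs) :=
              Finset.le_sup (f := fun j' => (g.val j').natAbs) (Finset.mem_univ j)
            have h2' : Finset.univ.sup (fun j' => (g.val j').natAbs) ≤ MA A :=
              Finset.le_sup (f := fun g => Finset.univ.sup fun j' => (g j').natAbs) g.prop
            rw [Int.abs_eq_natAbs]
            exact_mod_cast le_trans h1' h2'
          calc ((T' i).map (fun g => |g.val j|)).sum
              ≤ Multiset.card ((T' i).map (fun g => |g.val j|)) • ((MA A : ℕ) : ℤ) :=
                Multiset.sum_le_card_nsmul _ _ hbd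
            _ ≤ (g0 A B) • ((MA A : ℕ) : ℤ) := by
                have : (0 : ℤ) ≤ (MA A : ℕ) := Int.natCast_nonneg _
                exact nsmul_le_nsmul_left this hcard
            _ = ((g0 A B) * (MA A) : ℕ) := by push_cast; ring
        have : ((z (Sum.inl (i, j))).natAbs : ℤ) ≤ ((g0 A B) * (MA A) : ℕ) := by
          rw [← Int.abs_eq_natAbs]
          exact hxb
        have h2' : (z (Sum.inl (i, j))).natAbs ≤ g0 A B * MA A := by exact_mod_cast this
        exact le_trans h2' (le_max_left _ _)
      · -- y and s entries
        have h1' : z (Sum.inr r) = w (Sum.inr r) := rfl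
        have h2' : (w (Sum.inr r)).natAbs
            ≤ Finset.univ.sup (fun r' : Fin n ⊕ Fin m => (w (Sum.inr r')).natAbs) :=
          Finset.le_sup (f := fun r' : Fin n ⊕ Fin m => (w (Sum.inr r')).natAbs)
            (Finset.mem_univ r)
        have h3' : Finset.univ.sup (fun r' : Fin n ⊕ Fin m => (w (Sum.inr r')).natAbs)
            ≤ CE A B :=
          Finset.le_sup (f := fun w => Finset.univ.sup
            fun r' : Fin n ⊕ Fin m => (w (Sum.inr r')).natAbs) hwGE
        rw [h1']
        exact le_trans (le_trans h2' h3') (le_max_right _ _)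
  · -- at least two pieces : contradiction with indecomposability of z
    exfalso
    obtain ⟨a, W', rfl⟩ : ∃ a W', W = a ::ₘ W' := by
      rcases Multiset.empty_or_exists_mem W with he | ⟨a, haW⟩
      · rw [he] at h2; simp at h2
      · exact ⟨a, W.erase a, (Multiset.cons_erase haW).symm⟩
    have haW : a ∈ a ::ₘ W' := Multiset.mem_cons_self a W'
    obtain ⟨b, hbW'⟩ : ∃ b, b ∈ W' := by
      rcases Multiset.empty_or_exists_mem W' with he | h
      · rw [he] at h2; simp at h2
      · exact h
    have hconf : ∀ p ∈ (a ::ₘ W'), ∀ c, 0 ≤ p c * w c ∧ |p c| ≤ |w c| :=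
      fun p hp => piece_conf hW2 hW3 hp
    have hmemG : ∀ g : {g : Fin n → ℤ // g ∈ GA A}, InGraver A g.val := by
      intro g
      have h : g.val ∈ (graver_finite A).toFinset := g.prop
      have h2 : g.val ∈ {z : Fin n → ℤ | InGraver A z} :=
        (Set.Finite.mem_toFinset (graver_finite A)).mp h
      exact h2
    have haG := hW1 a haW
    have hbG := hW1 b (Multiset.mem_cons_of_mem hbW')
    have hγnn : ∀ p ∈ (a ::ₘ W'), ∀ g, 0 ≤ p (Sum.inl g) ∧ p (Sum.inl g) ≤ (lam g : ℤ) := by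
      intro p hp g
      obtain ⟨h1', h2'⟩ := hconf p hp (Sum.inl g)
      have hw : w (Sum.inl g) = (lam g : ℤ) := rfl
      rw [hw] at h1' h2'
      have hl : (0:ℤ) ≤ (lam g : ℤ) := Int.natCast_nonneg _
      rw [abs_of_nonneg hl] at h2'
      constructor
      · rcases eq_or_lt_of_le hl with he | hlt
        · have h4 : p (Sum.inl g) = 0 :=
            abs_eq_zero.mp (le_antisymm (by omega) (abs_nonneg _))
          omega
        · nlinarith
      · calc p (Sum.inl g) ≤ |p (Sum.inl g)| := le_abs_self _
          _ ≤ (lam g : ℤ) := h2'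
    have hzero : ∀ p, (Ematrix A B).mulVec p = 0 → (∀ g, p (Sum.inl g) = 0) → p = 0 := by
      intro p hp hg0
      obtain ⟨e1, e2⟩ := (E_kernel_iff A B p).mp hp
      funext c
      rcases c with g | (j | rr)
      · exact hg0 g
      · have h5 : (0:ℤ) = p (Sum.inr (Sum.inl j)) := by
          rw [← e1 j]
          exact (Finset.sum_eq_zero fun g _ => by rw [hg0 g, zero_mul]).symm
        exact h5.symm
      · have h5 : (0:ℤ) = -p (Sum.inr (Sum.inr rr)) := by
          rw [← e2 rr]
          exact (Finset.sum_eq_zero fun g _ => by rw [hg0 g, zero_mul]).symm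
        have : p (Sum.inr (Sum.inr rr)) = 0 := by linarith
        exact this
    set ν : {g : Fin n → ℤ // g ∈ GA A} → ℕ := fun g => (a (Sum.inl g)).toNat with hνdef
    have hνa : ∀ g, (ν g : ℤ) = a (Sum.inl g) := fun g =>
      Int.toNat_of_nonneg (hγnn a haW g).1
    have hνle : ∀ g, ν g ≤ lam g := by
      intro g
      have h1' := (hγnn a haW g).2
      have h2' := hνa g
      omega
    obtain ⟨S, hSle, hScnt⟩ := family_select Finset.univ T' ν (fun g => hνle g)
    set R : Fin N → Multiset {g : Fin n → ℤ // g ∈ GA A} := fun i => T' i - S i with hRdef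
    have hRS : ∀ i, R i + S i = T' i := fun i => tsub_add_cancel_of_le (hSle i)
    have hRle : ∀ i, R i ≤ T' i := fun i => tsub_le_self
    set u : ((Fin N × Fin n) ⊕ (Fin n ⊕ Fin m)) → ℤ :=
      Sum.elim (fun p => ((S p.1).map (fun g => g.val p.2)).sum)
        (fun r => a (Sum.inr r)) with hudef
    set v : ((Fin N × Fin n) ⊕ (Fin n ⊕ Fin m)) → ℤ := z - u with hvdef
    have hvblock : ∀ i j, v (Sum.inl (i, j)) = ((R i).map (fun g => g.val j)).sum := by
      intro i j
      have e1 : x i j = ((R i).map (fun g => g.val j)).sum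
          + ((S i).map (fun g => g.val j)).sum := by
        rw [hxT' i j, ← hRS i, Multiset.map_add, Multiset.sum_add]
      have e2 : v (Sum.inl (i,j)) = x i j - u (Sum.inl (i,j)) := rfl
      have e3 : u (Sum.inl (i,j)) = ((S i).map (fun g => g.val j)).sum := rfl
      rw [e2, e3, e1]; ring
    have hublockfun : ∀ i, (fun j => u (Sum.inl (i,j))) = ((S i).map Subtype.val).sum := by
      intro i; funext j
      have e3 : u (Sum.inl (i,j)) = ((S i).map (fun g => g.val j)).sum := rfl
      rw [e3, multiset_sum_apply, Multiset.map_map]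
      rfl
    have huA : ∀ i, A.mulVec (fun j => u (Sum.inl (i,j))) = 0 := by
      intro i
      rw [hublockfun i, ← Matrix.mulVecLin_apply, map_multiset_sum, Multiset.map_map]
      apply Multiset.sum_eq_zero
      intro h0 hh
      obtain ⟨g, hgm, rfl⟩ := Multiset.mem_map.mp hh
      show A.mulVecLin g.val = 0
      rw [Matrix.mulVecLin_apply]
      exact ((Set.Finite.mem_toFinset _).mp g.prop).2.1
    obtain ⟨ha1, ha2⟩ := (E_kernel_iff A B a).mp haG.2.1
    have hublocksum : ∀ j, (∑ i, u (Sum.inl (i,j)))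
        = ∑ g : {g : Fin n → ℤ // g ∈ GA A}, (ν g : ℤ) * g.val j := by
      intro j
      have h1' : ∀ i, u (Sum.inl (i,j)) = ∑ g : {g : Fin n → ℤ // g ∈ GA A},
          ((S i).count g) • g.val j := by
        intro i
        have e3 : u (Sum.inl (i,j)) = ((S i).map (fun g => g.val j)).sum := rfl
        rw [e3, map_sum_eq_count_sum]
      rw [Finset.sum_congr rfl fun i _ => h1' i, Finset.sum_comm]
      refine Finset.sum_congr rfl fun g _ => ?_
      rw [← hScnt g]
      simp only [nsmul_eq_mul]
      push_cast
      rw [Finset.sum_mul]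
    have huk : (AbarN A B N).mulVec u = 0 := by
      rw [abar_kernel_iff]
      refine ⟨huA, fun j => ?_, fun r => ?_⟩
      · rw [hublocksum j]
        have e4 : u (Sum.inr (Sum.inl j)) = a (Sum.inr (Sum.inl j)) := rfl
        rw [e4, ← ha1 j]
        exact Finset.sum_congr rfl fun g _ => by rw [hνa g]
      · have h1' : ∀ i, B.mulVec (fun j => u (Sum.inl (i,j))) r
            = ∑ g : {g : Fin n → ℤ // g ∈ GA A}, ((S i).count g) • (B.mulVec g.val r) := by
          intro i
          have e : B.mulVecLin (((S i).map Subtype.val).sum)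
              = ((S i).map (fun g => B.mulVecLin g.val)).sum := by
            rw [map_multiset_sum, Multiset.map_map]
            rfl
          calc B.mulVec (fun j => u (Sum.inl (i,j))) r
              = (((S i).map (fun g => B.mulVecLin g.val)).sum) r := by
                rw [hublockfun i, ← Matrix.mulVecLin_apply, e]
            _ = ((S i).map (fun g => B.mulVec g.val r)).sum := by
                rw [multiset_sum_apply, Multiset.map_map]
                rfl
            _ = ∑ g : {g : Fin n → ℤ // g ∈ GA A}, ((S i).count g) • (B.mulVec g.val r) :=
                map_sum_eq_count_sum _ _
        rw [Finset.sum_congr rfl fun i _ => h1' i, Finset.sum_comm]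
        have h2' : ∀ g : {g : Fin n → ℤ // g ∈ GA A},
            (∑ i, ((S i).count g) • (B.mulVec g.val r)) = (ν g : ℤ) * (B.mulVec g.val r) := by
          intro g
          rw [← hScnt g]
          simp only [nsmul_eq_mul]
          push_cast
          rw [Finset.sum_mul]
        rw [Finset.sum_congr rfl fun g _ => h2' g]
        have h3' := ha2 r
        have e4 : u (Sum.inr (Sum.inr r)) = a (Sum.inr (Sum.inr r)) := rfl
        rw [e4]
        rw [Finset.sum_congr rfl fun g (_ : g ∈ Finset.univ) => by rw [hνa g]]
        linarith
    have hvk : (AbarN A B N).mulVec v = 0 := by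
      have e : v = z - u := rfl
      rw [e, Matrix.mulVec_sub, hzk0, huk, sub_zero]
    have hsign : ∀ c, 0 ≤ u c * v c := by
      intro c
      rcases c with ⟨i, j⟩ | r
      · have hu' : u (Sum.inl (i,j)) = ((S i).map (fun g => g.val j)).sum := rfl
        rw [hu', hvblock i j]
        refine mul_sum_conf_nonneg (c := x i j) ?_ ?_
        · intro t ht
          obtain ⟨g, hgm, rfl⟩ := Multiset.mem_map.mp ht
          exact hpiece i g (Multiset.mem_of_le (hSle i) hgm) j
        · intro t ht
          obtain ⟨g, hgm, rfl⟩ := Multiset.mem_map.mp ht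
          exact hpiece i g (Multiset.mem_of_le (hRle i) hgm) j
      · have hu' : u (Sum.inr r) = a (Sum.inr r) := rfl
        have hv' : v (Sum.inr r) = w (Sum.inr r) - a (Sum.inr r) := rfl
        rw [hu', hv']
        obtain ⟨hc1, hc2⟩ := hconf a haW (Sum.inr r)
        exact conf_split hc1 hc2
    have hune : u ≠ 0 := by
      have ha0 : a ≠ 0 := haG.1
      obtain ⟨g₀, hg₀⟩ : ∃ g, 0 < ν g := by
        by_contra hno
        push_neg at hno
        apply ha0
        apply hzero a haG.2.1
        intro g
        have h1' := hno g
        have h2' := hνa g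
        omega
      obtain ⟨i₀, hi₀⟩ : ∃ i, 0 < (S i).count g₀ := by
        by_contra hno
        push_neg at hno
        have : (∑ i, (S i).count g₀) = 0 :=
          Finset.sum_eq_zero fun i _ => Nat.le_zero.mp (hno i)
        rw [hScnt g₀] at this
        omega
      have hg₀S : g₀ ∈ S i₀ := Multiset.count_pos.mp hi₀
      have hg₀G : InGraver A g₀.val := hmemG g₀
      obtain ⟨j₀, hj₀⟩ := Function.ne_iff.mp hg₀G.1
      intro h0
      have hcontra : u (Sum.inl (i₀, j₀)) = 0 := by rw [h0]; rfl
      have hu' : u (Sum.inl (i₀,j₀)) = ((S i₀).map (fun g => g.val j₀)).sum := rfl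
      refine sum_ne_zero_of_mem (c := x i₀ j₀) ?_
        (Multiset.mem_map_of_mem (fun g => g.val j₀) hg₀S) (by simpa using hj₀)
        (hu' ▸ hcontra)
      intro t ht
      obtain ⟨g, hgm, rfl⟩ := Multiset.mem_map.mp ht
      exact hpiece i₀ g (Multiset.mem_of_le (hSle i₀) hgm) j₀
    have hvne : v ≠ 0 := by
      obtain ⟨g₁, hg₁⟩ : ∃ g, 0 < b (Sum.inl g) := by
        by_contra hno
        push_neg at hno
        apply hbG.1
        apply hzero b hbG.2.1
        intro g
        have h1' := (hγnn b (Multiset.mem_cons_of_mem hbW') g).1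
        have h2' := hno g
        omega
      have hlt : ν g₁ < lam g₁ := by
        have habs1 := hW3 (Sum.inl g₁)
        rw [Multiset.map_cons, Multiset.sum_cons] at habs1
        have hble : |b (Sum.inl g₁)| ≤ (W'.map (fun p => |p (Sum.inl g₁)|)).sum :=
          Multiset.single_le_sum (fun t ht => by
            obtain ⟨p, -, rfl⟩ := Multiset.mem_map.mp ht
            exact abs_nonneg _) _ (Multiset.mem_map_of_mem _ hbW')
        have hwl : |w (Sum.inl g₁)| = (lam g₁ : ℤ) := by
          have e : w (Sum.inl g₁) = (lam g₁ : ℤ) := rfl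
          rw [e, abs_of_nonneg (Int.natCast_nonneg _)]
        have haν : |a (Sum.inl g₁)| = (ν g₁ : ℤ) := by
          rw [abs_of_nonneg (hγnn a haW g₁).1, hνa g₁]
        have hbpos : 0 < |b (Sum.inl g₁)| := abs_pos.mpr (ne_of_gt hg₁)
        rw [hwl, haν] at habs1
        have hfin : (ν g₁ : ℤ) < (lam g₁ : ℤ) := by linarith
        exact_mod_cast hfin
      obtain ⟨i₁, hi₁⟩ : ∃ i, (S i).count g₁ < (T' i).count g₁ := by
        by_contra hno
        push_neg at hno
        have h5 : lam g₁ ≤ ν g₁ := by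
          rw [← hScnt g₁]
          exact Finset.sum_le_sum fun i _ => hno i
        omega
      have hg₁R : g₁ ∈ R i₁ := by
        have e : (R i₁).count g₁ = (T' i₁).count g₁ - (S i₁).count g₁ :=
          Multiset.count_sub g₁ (T' i₁) (S i₁)
        apply Multiset.count_pos.mp
        omega
      have hg₁G : InGraver A g₁.val := hmemG g₁
      obtain ⟨j₁, hj₁⟩ := Function.ne_iff.mp hg₁G.1
      intro h0
      have hcontra : v (Sum.inl (i₁, j₁)) = 0 := by rw [h0]; rfl
      rw [hvblock i₁ j₁] at hcontra
      refine sum_ne_zero_of_mem (c := x i₁ j₁) ?_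
        (Multiset.mem_map_of_mem (fun g => g.val j₁) hg₁R) (by simpa using hj₁) hcontra
      intro t ht
      obtain ⟨g, hgm, rfl⟩ := Multiset.mem_map.mp ht
      exact hpiece i₁ g (Multiset.mem_of_le (hRle i₁) hgm) j₁
    exact hzind ⟨u, v, hune, hvne, huk, hvk, hsign, by
      funext c
      have e : v c = z c - u c := rfl
      simp only [Pi.add_apply, e]
      ring⟩

noncomputable def enc (C : ℕ) (t : ℤ) : Fin (2 * C + 1) :=
  ⟨(t + C).toNat % (2 * C + 1), Nat.mod_lt _ (by omega)⟩

lemma enc_dec {C : ℕ} {t : ℤ} (h : t.natAbs ≤ C) : ((enc C t : ℕ) : ℤ) - C = t := by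
  have h1 : 0 ≤ t + C := by omega
  have h2 : (t + C).toNat < 2 * C + 1 := by omega
  have h3 : (enc C t : ℕ) = (t + C).toNat := Nat.mod_eq_of_lt h2
  rw [h3]
  omega

noncomputable def Phi (N : ℕ)
    (p : (Fin (g0 A B) → (Fin N × (Fin n → Fin (2 * CC A B + 1)))) ×
         ((Fin n ⊕ Fin m) → Fin (2 * CC A B + 1))) :
    ((Fin N × Fin n) ⊕ (Fin n ⊕ Fin m)) → ℤ :=
  fun c =>
    match c with
    | Sum.inl (i, j) =>
        if h : (Finset.univ.filter (fun k => (p.1 k).1 = i)).Nonempty then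
          (((p.1 ((Finset.univ.filter (fun k => (p.1 k).1 = i)).min' h)).2 j : ℕ) : ℤ)
            - CC A B
        else 0
    | Sum.inr r => ((p.2 r : ℕ) : ℤ) - CC A B

lemma graver_in_range {N : ℕ} {z : ((Fin N × Fin n) ⊕ (Fin n ⊕ Fin m)) → ℤ}
    (hz : InGraver (AbarN A B N) z) : ∃ p, Phi A B N p = z := by
  classical
  obtain ⟨hcard, hbd⟩ := graver_abar_bounds A B hz
  set S : Finset (Fin N) :=
    Finset.univ.filter (fun i : Fin N => ∃ j, z (Sum.inl (i, j)) ≠ 0) with hSdef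
  have hSne : S.Nonempty := by
    rcases Finset.eq_empty_or_nonempty S with he | h
    · exfalso
      apply hz.1
      have hxz : ∀ i j, z (Sum.inl (i, j)) = 0 := by
        intro i j
        by_contra hne
        have : i ∈ S := by
          rw [hSdef]
          exact Finset.mem_filter.mpr ⟨Finset.mem_univ i, ⟨j, hne⟩⟩
        rw [he] at this
        exact absurd this (Finset.notMem_empty i)
      have hk := hz.2.1
      rw [abar_kernel_iff] at hk
      obtain ⟨-, hy, hs⟩ := hk
      funext c
      rcases c with ⟨i, j⟩ | (j | r)
      · exact hxz i j
      · have := hy j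
        simp only [hxz] at this
        simpa using this.symm
      · have := hs r
        have hB0 : ∀ i, B.mulVec (fun j => z (Sum.inl (i, j))) r = 0 := by
          intro i
          simp only [Matrix.mulVec, dotProduct, hxz, mul_zero]
          simp
        simp only [hB0] at this
        simpa using this
    · exact h
  set i₀ : Fin N := S.min' hSne with hi₀def
  have hi₀S : i₀ ∈ S := S.min'_mem hSne
  set f : Fin (g0 A B) → Fin N := fun k =>
    if h : (k : ℕ) < S.card then (S.orderIsoOfFin rfl ⟨k, h⟩ : Fin N) else i₀ with hfdef
  have hfS : ∀ k, f k ∈ S := by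
    intro k
    rw [hfdef]
    by_cases h : (k : ℕ) < S.card
    · simp only [dif_pos h]
      exact (S.orderIsoOfFin rfl ⟨k, h⟩).prop
    · simp only [dif_neg h]
      exact hi₀S
  have hfsurj : ∀ i ∈ S, ∃ k, f k = i := by
    intro i hi
    obtain ⟨idx, hidx⟩ := (S.orderIsoOfFin rfl).surjective ⟨i, hi⟩
    refine ⟨⟨idx, lt_of_lt_of_le idx.2 hcard⟩, ?_⟩
    rw [hfdef]
    have h : ((⟨(idx : ℕ), lt_of_lt_of_le idx.2 hcard⟩ : Fin (g0 A B)) : ℕ) < S.card := idx.2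
    simp only [dif_pos h]
    have : (⟨(idx : ℕ), idx.2⟩ : Fin S.card) = idx := by
      apply Fin.ext
      rfl
    rw [this, hidx]
  refine ⟨(fun k => (f k, fun j => enc (CC A B) (z (Sum.inl (f k, j)))),
    fun r => enc (CC A B) (z (Sum.inr r))), ?_⟩
  funext c
  rcases c with ⟨i, j⟩ | r
  · show (if h : (Finset.univ.filter (fun k => f k = i)).Nonempty then
        (((enc (CC A B) (z (Sum.inl (f ((Finset.univ.filter
          (fun k => f k = i)).min' h), j)))) : ℕ) : ℤ) - CC A B
      else 0) = z (Sum.inl (i, j))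
    by_cases hi : i ∈ S
    · obtain ⟨k, hk⟩ := hfsurj i hi
      have hne : (Finset.univ.filter (fun k => f k = i)).Nonempty :=
        ⟨k, Finset.mem_filter.mpr ⟨Finset.mem_univ k, hk⟩⟩
      rw [dif_pos hne]
      have hk₀ : f ((Finset.univ.filter (fun k => f k = i)).min' hne) = i := by
        have := Finset.min'_mem (Finset.univ.filter (fun k => f k = i)) hne
        exact (Finset.mem_filter.mp this).2
      rw [hk₀]
      exact enc_dec (hbd _)
    · have hno : ¬ (Finset.univ.filter (fun k => f k = i)).Nonempty := by
        rintro ⟨k, hk⟩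
        have := (Finset.mem_filter.mp hk).2
        exact hi (this ▸ hfS k)
      rw [dif_neg hno]
      have : ¬ ∃ j, z (Sum.inl (i, j)) ≠ 0 := by
        intro hex
        exact hi (Finset.mem_filter.mpr ⟨Finset.mem_univ i, hex⟩)
      push_neg at this
      exact (this j).symm
  · exact enc_dec (hbd _)

end Main

end GraverAux

open GraverAux in
/-- For fixed `A` and `B`, the sizes and encoding lengths of the Graver bases of the
problem matrices `Ā⁽ᴺ⁾` grow only polynomially in `N`. -/
theorem abar_graver_polynomial_bound
    (d n m : ℕ) (A : Matrix (Fin d) (Fin n) ℤ) (B : Matrix (Fin m) (Fin n) ℤ) :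
    ∃ p : Polynomial ℕ, ∀ N : ℕ,
      ∃ G : Finset (((Fin N × Fin n) ⊕ (Fin n ⊕ Fin m)) → ℤ),
        (↑G = {z | InGraver (AbarN A B N) z}) ∧
        G.card ≤ p.eval N ∧ (∑ z ∈ G, encLen z) ≤ p.eval N := by
  classical
  set C : ℕ := CC A B with hCdef
  set G0 : ℕ := g0 A B with hG0def
  set E1 : ℕ := (2 * C + 1) ^ n with hE1def
  set E2 : ℕ := (2 * C + 1) ^ (n + m) with hE2def
  set a : ℕ := E1 ^ G0 * E2 * ((n + m) * (C + 1) + 1) with hadef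
  refine ⟨Polynomial.C a * (Polynomial.X + 1) ^ (G0 + 1), fun N => ?_⟩
  have heval : (Polynomial.C a * (Polynomial.X + 1) ^ (G0 + 1) : Polynomial ℕ).eval N
      = a * (N + 1) ^ (G0 + 1) := by
    simp [Polynomial.eval_mul, Polynomial.eval_pow]
  rw [heval]
  have hcardbd : (graver_finite (AbarN A B N)).toFinset.card
      ≤ (N + 1) ^ G0 * E1 ^ G0 * E2 := by
    have hsub : (graver_finite (AbarN A B N)).toFinset
        ⊆ Finset.image (Phi A B N) Finset.univ := by
      intro z hzm
      have hz : z ∈ {z | InGraver (AbarN A B N) z} :=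
        (Set.Finite.mem_toFinset (graver_finite (AbarN A B N))).mp hzm
      obtain ⟨p, hp⟩ := graver_in_range A B hz
      exact Finset.mem_image.mpr ⟨p, Finset.mem_univ p, hp⟩
    have h1 : (graver_finite (AbarN A B N)).toFinset.card
        ≤ (Finset.image (Phi A B N) Finset.univ).card := Finset.card_le_card hsub
    have h2 : (Finset.image (Phi A B N) Finset.univ).card
        ≤ Fintype.card ((Fin G0 → (Fin N × (Fin n → Fin (2 * C + 1)))) ×
            ((Fin n ⊕ Fin m) → Fin (2 * C + 1))) := by
      calc (Finset.image (Phi A B N) Finset.univ).card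
          ≤ (Finset.univ : Finset ((Fin G0 → (Fin N × (Fin n → Fin (2 * C + 1)))) ×
              ((Fin n ⊕ Fin m) → Fin (2 * C + 1)))).card := Finset.card_image_le
        _ = _ := Finset.card_univ
    have h3 : Fintype.card ((Fin G0 → (Fin N × (Fin n → Fin (2 * C + 1)))) ×
        ((Fin n ⊕ Fin m) → Fin (2 * C + 1))) = (N * E1) ^ G0 * E2 := by
      simp [Fintype.card_fun, hE1def, hE2def]
    have h4 : (N * E1) ^ G0 * E2 ≤ (N + 1) ^ G0 * E1 ^ G0 * E2 := by
      have : (N * E1) ^ G0 ≤ ((N + 1) * E1) ^ G0 :=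
        Nat.pow_le_pow_left (Nat.mul_le_mul_right _ (Nat.le_succ N)) _
      calc (N * E1) ^ G0 * E2 ≤ ((N + 1) * E1) ^ G0 * E2 := Nat.mul_le_mul_right _ this
        _ = (N + 1) ^ G0 * E1 ^ G0 * E2 := by rw [mul_pow]
    exact le_trans h1 (le_trans h2 (le_trans (le_of_eq h3) h4))
  refine ⟨(graver_finite (AbarN A B N)).toFinset, Set.Finite.coe_toFinset _, ?_, ?_⟩
  · -- cardinality bound
    calc (graver_finite (AbarN A B N)).toFinset.card
        ≤ (N + 1) ^ G0 * E1 ^ G0 * E2 := hcardbd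
      _ ≤ a * (N + 1) ^ (G0 + 1) := by
          rw [hadef]
          calc (N + 1) ^ G0 * E1 ^ G0 * E2 = (E1 ^ G0 * E2) * (N + 1) ^ G0 := by ring
            _ ≤ (E1 ^ G0 * E2 * ((n + m) * (C + 1) + 1)) * (N + 1) ^ (G0 + 1) := by
                refine Nat.mul_le_mul ?_ ?_
                · exact Nat.le_mul_of_pos_right _ (by omega)
                · exact Nat.pow_le_pow_right (by omega) (by omega)
  · -- encoding length bound
    have hterm : ∀ z ∈ (graver_finite (AbarN A B N)).toFinset,
        encLen z ≤ (N + 1) * ((n + m) * (C + 1)) := by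
      intro z hzm
      have hz : z ∈ {z | InGraver (AbarN A B N) z} :=
        (Set.Finite.mem_toFinset (graver_finite (AbarN A B N))).mp hzm
      obtain ⟨-, hbd⟩ := graver_abar_bounds A B hz
      have h1 : encLen z ≤ ∑ _c : ((Fin N × Fin n) ⊕ (Fin n ⊕ Fin m)), (C + 1) := by
        refine Finset.sum_le_sum fun c _ => ?_
        have := hbd c
        omega
      have h2 : (∑ _c : ((Fin N × Fin n) ⊕ (Fin n ⊕ Fin m)), (C + 1))
          = (N * n + (n + m)) * (C + 1) := by
        rw [Finset.sum_const, Finset.card_univ]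
        simp [Fintype.card_sum, Fintype.card_prod, mul_comm, Nat.smul_one_eq_cast]
      have h3 : (N * n + (n + m)) * (C + 1) ≤ ((N + 1) * (n + m)) * (C + 1) := by
        have : N * n + (n + m) ≤ (N + 1) * (n + m) := by nlinarith
        exact Nat.mul_le_mul_right _ this
      calc encLen z ≤ (N * n + (n + m)) * (C + 1) := le_trans h1 (le_of_eq h2)
        _ ≤ ((N + 1) * (n + m)) * (C + 1) := h3
        _ = (N + 1) * ((n + m) * (C + 1)) := by ring
    calc (∑ z ∈ (graver_finite (AbarN A B N)).toFinset, encLen z)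
        ≤ ∑ _z ∈ (graver_finite (AbarN A B N)).toFinset, (N + 1) * ((n + m) * (C + 1)) :=
          Finset.sum_le_sum hterm
      _ = (graver_finite (AbarN A B N)).toFinset.card * ((N + 1) * ((n + m) * (C + 1))) := by
          rw [Finset.sum_const, smul_eq_mul]
      _ ≤ ((N + 1) ^ G0 * E1 ^ G0 * E2) * ((N + 1) * ((n + m) * (C + 1))) :=
          Nat.mul_le_mul_right _ hcardbd
      _ ≤ a * (N + 1) ^ (G0 + 1) := by
          rw [hadef]
          calc ((N + 1) ^ G0 * E1 ^ G0 * E2) * ((N + 1) * ((n + m) * (C + 1)))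
              = (E1 ^ G0 * E2 * ((n + m) * (C + 1))) * (N + 1) ^ (G0 + 1) := by ring
            _ ≤ (E1 ^ G0 * E2 * ((n + m) * (C + 1) + 1)) * (N + 1) ^ (G0 + 1) := by
                refine Nat.mul_le_mul_right _ (Nat.mul_le_mul_left _ (by omega))
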